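/- There is no quantum state ψ and pairwise commuting ±1-eigenvalue observables X̂, Ŷ, Ẑ on any finite-dimensional Hilbert space such that ⟨ψ, X̂Ŷψ⟩ = -1, ⟨ψ, X̂Ẑψ⟩ = -1/2, and ⟨ψ, ŶẐψ⟩ = 0. -/

import Mathlib

/-- There is no unit vector ψ and pairwise commuting ±1-eigenvalue observables
X̂, Ŷ, Ẑ on a finite-dimensional Hilbert space with ⟨ψ, X̂Ŷψ⟩ = -1,
⟨ψ, X̂Ẑψ⟩ = -1/2, ⟨ψ, ŶẐψ⟩ = 0. -/
theorem stmt_7 :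
    ¬ ∃ (H : Type) (_ : NormedAddCommGroup H) (_ : InnerProductSpace ℂ H)
      (_ : FiniteDimensional ℂ H) (X Y Z : H →L[ℂ] H) (ψ : H),
      IsSelfAdjoint X ∧ IsSelfAdjoint Y ∧ IsSelfAdjoint Z ∧
      X * X = 1 ∧ Y * Y = 1 ∧ Z * Z = 1 ∧
      Commute X Y ∧ Commute Y Z ∧ Commute X Z ∧
      ‖ψ‖ = 1 ∧
      (inner ℂ ψ ((X * Y) ψ) : ℂ) = -1 ∧
      (inner ℂ ψ ((X * Z) ψ) : ℂ) = -1/2 ∧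
      (inner ℂ ψ ((Y * Z) ψ) : ℂ) = 0 := by
  rintro ⟨H, _, _, _, X, Y, Z, ψ, hX, hY, hZ, hX2, hY2, hZ2, hXY, hYZ, hXZ, hψ, e1, e2, e3⟩
  haveI : CompleteSpace H := FiniteDimensional.complete ℂ H
  have adjX : ContinuousLinearMap.adjoint X = X := by
    rw [← ContinuousLinearMap.star_eq_adjoint]; exact hX
  have adjY : ContinuousLinearMap.adjoint Y = Y := by
    rw [← ContinuousLinearMap.star_eq_adjoint]; exact hY
  have hax : ∀ v w : H, (inner ℂ (X v) w : ℂ) = inner ℂ v (X w) := fun v w => by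
    conv_lhs => rw [← adjX]
    exact ContinuousLinearMap.adjoint_inner_left X w v
  have hay : ∀ v w : H, (inner ℂ (Y v) w : ℂ) = inner ℂ v (Y w) := fun v w => by
    conv_lhs => rw [← adjY]
    exact ContinuousLinearMap.adjoint_inner_left Y w v
  have hXX : ∀ v : H, X (X v) = v := fun v => by
    have := congrArg (fun T : H →L[ℂ] H => T v) hX2
    simpa using this
  have hYY : ∀ v : H, Y (Y v) = v := fun v => by
    have := congrArg (fun T : H →L[ℂ] H => T v) hY2
    simpa using this
  have hψψ : (inner ℂ ψ ψ : ℂ) = 1 := by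
    rw [inner_self_eq_norm_sq_to_K, hψ]; norm_num
  have e1' : (inner ℂ ψ (X (Y ψ)) : ℂ) = -1 := by
    simpa [ContinuousLinearMap.mul_apply] using e1
  have key : X (Y ψ) = -ψ := by
    have h0 : (inner ℂ (X (Y ψ) + ψ) (X (Y ψ) + ψ) : ℂ) = 0 := by
      rw [inner_add_add_self]
      have a1 : (inner ℂ (X (Y ψ)) (X (Y ψ)) : ℂ) = 1 := by
        rw [hax, hXX, hay, hYY, hψψ]
      have a2 : (inner ℂ (X (Y ψ)) ψ : ℂ) = -1 := by
        rw [← inner_conj_symm, e1']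
        simp
      rw [a1, a2, e1', hψψ]; ring
    have := inner_self_eq_zero.mp h0
    linear_combination (norm := abel) this
  have hYX : Y ψ = -(X ψ) := by
    have := congrArg X key
    rw [hXX] at this
    simpa using this
  have e3' : (inner ℂ ψ (Y (Z ψ)) : ℂ) = 0 := by
    simpa [ContinuousLinearMap.mul_apply] using e3
  have e2' : (inner ℂ ψ (X (Z ψ)) : ℂ) = -1/2 := by
    simpa [ContinuousLinearMap.mul_apply] using e2
  have : (inner ℂ ψ (Y (Z ψ)) : ℂ) = 1/2 := by
    rw [← hay, hYX, inner_neg_left, hax, e2']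
    norm_num
  rw [e3'] at this
  norm_num at this
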